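/- Let U ⊆ ℝ⁴ be open with coordinates (x⁰,x¹,x²,x³) = (t,x), let c : U → (0,∞) be smooth, and let g = diag(−c²,1,1,1) with inverse g^{−1} = diag(−c^{−2},1,1,1). Define the Christoffel symbols Γ_{αβγ} := ½(∂_αg_{βγ} + ∂_γg_{αβ} − ∂_βg_{αγ}) and the Riemann curvature tensor in coordinates by R_{μναβ} := ∂_νΓ_{μβα} − ∂_μΓ_{νβα} + g^{κλ}(Γ_{νκα}Γ_{μλβ} − Γ_{μκα}Γ_{νλβ}). Then for all spatial indices i,j,k,l ∈ {1,2,3}: R_{0i0j} = c·∂²_{ij}c, while R_{ijkl} = 0 and R_{0ijk} = 0 (hence, up to the symmetries of the curvature tensor, the only non-vanishing components are R_{0i0j} = c∂²_{ij}c). -/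

import Mathlib

noncomputable section

open scoped BigOperators

/-- Points of ℝ⁴ with coordinates (x⁰,x¹,x²,x³) = (t,x¹,x²,x³). -/
abbrev Pt : Type := Fin 4 → ℝ

/-- Partial derivative ∂_α f. -/
def pd (f : Pt → ℝ) (α : Fin 4) (x : Pt) : ℝ :=
  fderiv ℝ f x (Pi.single α 1)

/-- The acoustic metric g = diag(−c², 1, 1, 1). -/
def gMat (c : Pt → ℝ) (α β : Fin 4) (x : Pt) : ℝ :=
  if α = β then (if α = 0 then -(c x) ^ 2 else 1) else 0

/-- The inverse metric g⁻¹ = diag(−c⁻², 1, 1, 1). -/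
def gInv (c : Pt → ℝ) (α β : Fin 4) (x : Pt) : ℝ :=
  if α = β then (if α = 0 then -((c x) ^ 2)⁻¹ else 1) else 0

/-- Vf = V^α ∂_α f. -/
def vApp (V : Pt → Fin 4 → ℝ) (f : Pt → ℝ) (x : Pt) : ℝ :=
  ∑ α, V x α * pd f α x

/-- g(V, W) = g_{αβ} V^α W^β. -/
def gPair (c : Pt → ℝ) (V W : Pt → Fin 4 → ℝ) (x : Pt) : ℝ :=
  ∑ α, ∑ β, gMat c α β x * V x α * W x β

/-- L̂^α = −g^{αβ}∂_β u. -/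
def Lhat (c u : Pt → ℝ) (x : Pt) (α : Fin 4) : ℝ :=
  -∑ β, gInv c α β x * pd u β x

/-- The inverse foliation density μ = 1/(c⁻²∂_t u). -/
def invDens (c u : Pt → ℝ) (x : Pt) : ℝ :=
  (((c x) ^ 2)⁻¹ * pd u 0 x)⁻¹

/-- L = μ L̂  (so L⁰ = 1). -/
def Lvec (c u : Pt → ℝ) (x : Pt) (α : Fin 4) : ℝ :=
  invDens c u x * Lhat c u x α

/-- T̂ = c⁻¹(∂_t − L). -/
def That (c u : Pt → ℝ) (x : Pt) (α : Fin 4) : ℝ :=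
  (c x)⁻¹ * ((if α = 0 then 1 else 0) - Lvec c u x α)

/-- T = c⁻¹ μ T̂. -/
def Tvec (c u : Pt → ℝ) (x : Pt) (α : Fin 4) : ℝ :=
  (c x)⁻¹ * invDens c u x * That c u x α

/-- L̄ = c⁻²μ L + 2T. -/
def Lbar (c u : Pt → ℝ) (x : Pt) (α : Fin 4) : ℝ :=
  ((c x) ^ 2)⁻¹ * invDens c u x * Lvec c u x α + 2 * Tvec c u x α

/-- The induced inverse metric ĝ^{αβ} = g^{αβ} + (2μ)⁻¹(L^αL̄^β + L̄^αL^β). -/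
def ghat (c u : Pt → ℝ) (α β : Fin 4) (x : Pt) : ℝ :=
  gInv c α β x + (2 * invDens c u x)⁻¹ *
    (Lvec c u x α * Lbar c u x β + Lbar c u x α * Lvec c u x β)

/-- The Christoffel symbols Γ_{αβγ} = ½(∂_α g_{βγ} + ∂_γ g_{αβ} − ∂_β g_{αγ}). -/
def Gamlow (c : Pt → ℝ) (α β γ : Fin 4) (x : Pt) : ℝ :=
  (1 / 2) * (pd (fun y => gMat c β γ y) α x + pd (fun y => gMat c α β y) γ x
    - pd (fun y => gMat c α γ y) β x)

/-- Γ^γ_{αβ} = g^{γλ} Γ_{αλβ}. -/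
def Gam (c : Pt → ℝ) (γ α β : Fin 4) (x : Pt) : ℝ :=
  ∑ l, gInv c γ l x * Gamlow c α l β x

/-- The Levi-Civita covariant derivative: (D_X V)^γ = X^α(∂_α V^γ + Γ^γ_{αβ}V^β). -/
def covD (c : Pt → ℝ) (X V : Pt → Fin 4 → ℝ) (x : Pt) (γ : Fin 4) : ℝ :=
  ∑ α, X x α * (pd (fun y => V y γ) α x + ∑ β, Gam c γ α β x * V x β)

/-- The Riemann curvature tensor in coordinates:
R_{μναβ} = ∂_νΓ_{μβα} − ∂_μΓ_{νβα} + g^{κλ}(Γ_{νκα}Γ_{μλβ} − Γ_{μκα}Γ_{νλβ}). -/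
def Riem (c : Pt → ℝ) (μ ν α β : Fin 4) (x : Pt) : ℝ :=
  pd (fun y => Gamlow c μ β α y) ν x - pd (fun y => Gamlow c ν β α y) μ x
    + ∑ κ, ∑ l, gInv c κ l x
      * (Gamlow c ν κ α x * Gamlow c μ l β x - Gamlow c μ κ α x * Gamlow c ν l β x)

section AuxCurv

lemma pd_congr {f g : Pt → ℝ} {x : Pt} (h : f =ᶠ[nhds x] g) (α : Fin 4) :
    pd f α x = pd g α x := by
  unfold pd; rw [h.fderiv_eq]

lemma pd_const (a : ℝ) (α : Fin 4) (x : Pt) : pd (fun _ => a) α x = 0 := by simp [pd]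

lemma pd_mul {f g : Pt → ℝ} {x : Pt} (hf : DifferentiableAt ℝ f x)
    (hg : DifferentiableAt ℝ g x) (δ : Fin 4) :
    pd (fun y => f y * g y) δ x = pd f δ x * g x + f x * pd g δ x := by
  unfold pd
  rw [fderiv_fun_mul hf hg]
  simp; ring

lemma pd_neg_sq {c : Pt → ℝ} {x : Pt} (hd : DifferentiableAt ℝ c x) (δ : Fin 4) :
    pd (fun y => -(c y) ^ 2) δ x = -2 * c x * pd c δ x := by
  have h1 : (fun y => -(c y) ^ 2) = fun y => (-1 : ℝ) * (c y * c y) := by funext y; ring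
  rw [h1, pd_mul (g := fun y => c y * c y) (differentiableAt_const _) (hd.mul hd), pd_mul hd hd, pd_const]
  ring

lemma diff_pd {c : Pt → ℝ} {x : Pt} (hc : ContDiffAt ℝ (⊤ : ℕ∞) c x) (j : Fin 4) :
    DifferentiableAt ℝ (fun y => pd c j y) x := by
  have h1 : ContDiffAt ℝ 1 (fderiv ℝ c) x := hc.fderiv_right (by norm_cast)
  exact ((h1.clm_apply contDiffAt_const).differentiableAt one_ne_zero)

lemma pd_gMat {c : Pt → ℝ} {x : Pt} (hd : DifferentiableAt ℝ c x) (α β δ : Fin 4) :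
    pd (fun y => gMat c α β y) δ x =
      if α = 0 ∧ β = 0 then -2 * c x * pd c δ x else 0 := by
  by_cases hab : α = β
  · subst hab
    by_cases h0 : α = 0
    · subst h0
      have hfun : (fun y => gMat c 0 0 y) = fun y => -(c y) ^ 2 := by
        funext y; simp [gMat]
      rw [hfun, pd_neg_sq hd]; simp
    · have hfun : (fun y => gMat c α α y) = fun _ => (1 : ℝ) := by
        funext y; simp [gMat, h0]
      rw [hfun, pd_const]; simp [h0]
  · have hne : ¬ (α = 0 ∧ β = 0) := fun ⟨h1, h2⟩ => hab (h1.trans h2.symm)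
    have hfun : (fun y => gMat c α β y) = fun _ => (0 : ℝ) := by
      funext y; simp [gMat, hab]
    rw [hfun, pd_const]; simp [hne]

lemma Gamlow_eq {c : Pt → ℝ} {x : Pt} (hd : DifferentiableAt ℝ c x) (α β γ : Fin 4) :
    Gamlow c α β γ x = -(c x) *
      ((if β = 0 then 1 else 0) * (if γ = 0 then 1 else 0) * pd c α x
        + (if α = 0 then 1 else 0) * (if β = 0 then 1 else 0) * pd c γ x
        - (if α = 0 then 1 else 0) * (if γ = 0 then 1 else 0) * pd c β x) := by
  unfold Gamlow
  rw [pd_gMat hd, pd_gMat hd, pd_gMat hd]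
  by_cases hα : α = 0 <;> by_cases hβ : β = 0 <;> by_cases hγ : γ = 0 <;>
    simp [hα, hβ, hγ] <;> ring

lemma pd_Gamlow_zero {c : Pt → ℝ} {U : Set Pt} {x : Pt} (hU : IsOpen U) (hx : x ∈ U)
    (hdU : ∀ y ∈ U, DifferentiableAt ℝ c y) {a b d : Fin 4}
    (h : (a ≠ 0 ∧ b ≠ 0) ∨ (a ≠ 0 ∧ d ≠ 0) ∨ (b ≠ 0 ∧ d ≠ 0)) (δ : Fin 4) :
    pd (fun y => Gamlow c a b d y) δ x = 0 := by
  have hev : (fun y => Gamlow c a b d y) =ᶠ[nhds x] (fun _ => (0 : ℝ)) := by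
    filter_upwards [hU.mem_nhds hx] with y hy
    rw [Gamlow_eq (hdU y hy)]
    rcases h with ⟨h1, h2⟩ | ⟨h1, h2⟩ | ⟨h1, h2⟩ <;> simp [h1, h2]
  rw [pd_congr hev, pd_const]

end AuxCurv

/-- Equations (2.23)–(2.24): for g = diag(−c²,1,1,1) the only non-vanishing
curvature components (up to symmetries) are R_{0i0j} = c∂²_{ij}c. -/
theorem curvature_of_acoustic_metric
    (U : Set Pt) (hU : IsOpen U) (c : Pt → ℝ)
    (hc : ContDiffOn ℝ (⊤ : ℕ∞) c U) (hcpos : ∀ x ∈ U, 0 < c x) :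
    ∀ x ∈ U, ∀ i j k l : Fin 4, i ≠ 0 → j ≠ 0 → k ≠ 0 → l ≠ 0 →
      Riem c 0 i 0 j x = c x * pd (fun y => pd c j y) i x ∧
      Riem c i j k l x = 0 ∧
      Riem c 0 i j k x = 0 := by
  intro x hx i j k l hi hj hk hl
  have hcx : ContDiffAt ℝ (⊤ : ℕ∞) c x := hc.contDiffAt (hU.mem_nhds hx)
  have hdU : ∀ y ∈ U, DifferentiableAt ℝ c y := fun y hy =>
    (hc.contDiffAt (hU.mem_nhds hy)).differentiableAt (by norm_cast)
  have hdx : DifferentiableAt ℝ c x := hdU x hx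
  have hc0 : c x ≠ 0 := (hcpos x hx).ne'
  have hevA : (fun y => Gamlow c 0 j 0 y) =ᶠ[nhds x] fun y => c y * pd c j y := by
    filter_upwards [hU.mem_nhds hx] with y hy
    rw [Gamlow_eq (hdU y hy)]
    simp [hj]
  have hA : pd (fun y => Gamlow c 0 j 0 y) i x
      = pd c i x * pd c j x + c x * pd (fun y => pd c j y) i x := by
    rw [pd_congr hevA, pd_mul hdx (diff_pd hcx j)]
  refine ⟨?_, ?_, ?_⟩
  · unfold Riem
    rw [hA, pd_Gamlow_zero hU hx hdU (Or.inl ⟨hi, hj⟩)]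
    simp only [Fin.sum_univ_four, Gamlow_eq hdx, gInv]
    simp only [Fin.isValue, hi, hj, if_neg hi, if_neg hj]
    simp (config := { decide := true }) only []
    norm_num [Fin.ext_iff]
    field_simp
    ring
  · unfold Riem
    rw [pd_Gamlow_zero hU hx hdU (Or.inl ⟨hi, hl⟩),
      pd_Gamlow_zero hU hx hdU (Or.inl ⟨hj, hl⟩)]
    simp only [Fin.sum_univ_four, Gamlow_eq hdx, gInv]
    simp only [if_neg hi, if_neg hj, if_neg hk, if_neg hl]
    norm_num [Fin.ext_iff]
  · unfold Riem
    rw [pd_Gamlow_zero hU hx hdU (Or.inr (Or.inr ⟨hk, hj⟩)),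
      pd_Gamlow_zero hU hx hdU (Or.inl ⟨hi, hk⟩)]
    simp only [Fin.sum_univ_four, Gamlow_eq hdx, gInv]
    simp only [if_neg hi, if_neg hj, if_neg hk, if_neg hl]
    norm_num [Fin.ext_iff]
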